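/- arXiv:1105.4206 — 6 statements merged into one kernel-verified Lean document; each statement's English description precedes it below -/
import Mathlib

section
/- For every real α > 0 and every positive integer M, ∫₀^∞ log₂(1 + α·x) · x^(M−1) e^(−x) / (M−1)! dx = log₂(e) · e^(1/α) · Σ_{k=0}^{M−1} Γ(−k, 1/α) / α^k, where Γ(s, y) = ∫_y^∞ t^(s−1) e^(−t) dt is the upper incomplete Gamma function. (This is the closed form R⁽¹⁾(α, M) = E[log₂(1+X)] for X = α·Z with Z having the Gamma(M,1) density, i.e., the paper's convention for a χ²_{2M} variable.) -/
set_option maxHeartbeats 1000000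

open Real MeasureTheory Finset Set Filter Topology

/-- The upper incomplete Gamma function `Γ(s, y) = ∫_y^∞ t^(s−1) e^(−t) dt`. -/
noncomputable def upperIncompleteGamma (s y : ℝ) : ℝ :=
  ∫ t in Set.Ioi y, t ^ (s - 1) * Real.exp (-t)

lemma shift_Ioi (f : ℝ → ℝ) (c : ℝ) :
    ∫ u in Set.Ioi c, f u = ∫ x in Set.Ioi (0:ℝ), f (x + c) := by
  rw [← integral_indicator measurableSet_Ioi, ← integral_indicator measurableSet_Ioi,
    ← integral_add_right_eq_self (Set.indicator (Set.Ioi c) f) c]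
  congr 1; ext x
  by_cases h : 0 < x
  · simp [Set.indicator_apply, Set.mem_Ioi, h, lt_add_iff_pos_left]
  · simp [Set.indicator_apply, Set.mem_Ioi, h, lt_add_iff_pos_left]

lemma integrableOn_pow_exp (n : ℕ) :
    IntegrableOn (fun x => x ^ n * Real.exp (-x)) (Set.Ioi (0:ℝ)) := by
  have h := Real.GammaIntegral_convergent (s := n + 1) (by positivity)
  refine h.congr_fun (fun x hx => ?_) measurableSet_Ioi
  rw [add_sub_cancel_right]; beta_reduce; rw [Real.rpow_natCast, mul_comm]

lemma int_pow_exp (n : ℕ) :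
    ∫ x in Set.Ioi (0:ℝ), x ^ n * Real.exp (-x) = (Nat.factorial n : ℝ) := by
  have h := Real.Gamma_eq_integral (s := n + 1) (by positivity)
  rw [Real.Gamma_nat_eq_factorial] at h
  rw [h]
  refine setIntegral_congr_fun measurableSet_Ioi (fun x hx => ?_)
  rw [add_sub_cancel_right, Real.rpow_natCast, mul_comm]

lemma integrableOn_rpow_exp {y s : ℝ} (hy : 0 < y) (hs : s ≤ 0) :
    IntegrableOn (fun u => u ^ s * Real.exp (-u)) (Set.Ioi y) := by
  have hbase : IntegrableOn (fun u => y ^ s * Real.exp (-u)) (Set.Ioi y) := by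
    have := (exp_neg_integrableOn_Ioi y one_pos)
    simp only [one_mul, neg_mul] at this
    exact this.const_mul _
  refine hbase.mono' ?_ ?_
  · exact ((continuousOn_id.rpow_const (fun x hx => Or.inl (lt_trans hy hx).ne')).mul
      ((Real.continuous_exp.comp continuous_neg).continuousOn)).aestronglyMeasurable
      measurableSet_Ioi
  · filter_upwards [ae_restrict_mem measurableSet_Ioi] with u hu
    have hu' : y < u := hu
    have h1 : u ^ s ≤ y ^ s := Real.rpow_le_rpow_of_nonpos hy hu'.le hs
    have h2 : (0:ℝ) ≤ u ^ s := Real.rpow_nonneg (hy.trans hu').le _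
    rw [Real.norm_eq_abs, abs_of_nonneg (by positivity : (0:ℝ) ≤ u ^ s * Real.exp (-u))]
    exact mul_le_mul_of_nonneg_right h1 (Real.exp_pos _).le

lemma tendsto_rpow_exp {s : ℝ} (hs : s ≤ 0) :
    Tendsto (fun u : ℝ => u ^ s * Real.exp (-u)) atTop (𝓝 0) := by
  apply squeeze_zero' (g := fun u => Real.exp (-u))
  · filter_upwards [eventually_gt_atTop 0] with u hu
    positivity
  · filter_upwards [eventually_ge_atTop 1] with u hu
    have : u ^ s ≤ 1 := Real.rpow_le_one_of_one_le_of_nonpos hu hs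
    nlinarith [Real.exp_pos (-u), Real.rpow_nonneg (by linarith : (0:ℝ) ≤ u) s]
  · exact Real.tendsto_exp_neg_atTop_nhds_zero

lemma gammaRec {y s : ℝ} (hy : 0 < y) (hs : s ≤ 0) :
    upperIncompleteGamma (s + 1) y = s * upperIncompleteGamma s y + y ^ s * Real.exp (-y) := by
  have key : ∫ u in Set.Ioi y, (s * (u ^ (s - 1) * Real.exp (-u)) - u ^ s * Real.exp (-u))
      = 0 - y ^ s * Real.exp (-y) := by
    refine integral_Ioi_of_hasDerivAt_of_tendsto
        (f := fun u => u ^ s * Real.exp (-u))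
        (f' := fun u => s * (u ^ (s - 1) * Real.exp (-u)) - u ^ s * Real.exp (-u)) ?_ ?_ ?_ ?_
    · apply ContinuousAt.continuousWithinAt
      exact ((Real.continuousAt_rpow_const y s (Or.inl hy.ne')).mul
        ((Real.continuous_exp.comp continuous_neg).continuousAt))
    · intro x hx
      have hx0 : (0:ℝ) < x := lt_trans hy hx
      have h1 : HasDerivAt (fun u : ℝ => u ^ s) (s * x ^ (s - 1)) x := by
        simpa [mul_comm] using Real.hasDerivAt_rpow_const (p := s) (Or.inl hx0.ne')
      have h2 : HasDerivAt (fun u : ℝ => Real.exp (-u)) (-Real.exp (-x)) x := by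
        simpa using (hasDerivAt_neg x).exp
      have := h1.mul h2
      refine this.congr_deriv ?_
      ring
    · exact ((integrableOn_rpow_exp hy (by linarith)).const_mul s).sub
        (integrableOn_rpow_exp hy hs)
    · exact tendsto_rpow_exp hs
  have hint1 : IntegrableOn (fun u : ℝ => s * (u ^ (s-1) * Real.exp (-u))) (Set.Ioi y) := by
    exact ((integrableOn_rpow_exp hy (by linarith)).const_mul s)
  have hint2 := integrableOn_rpow_exp hy hs
  rw [integral_sub hint1 hint2, MeasureTheory.integral_const_mul] at key
  unfold upperIncompleteGamma
  have : ∫ t in Set.Ioi y, t ^ (s + 1 - 1) * Real.exp (-t) = ∫ t in Set.Ioi y, t ^ s * Real.exp (-t) := by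
    norm_num
  rw [this]
  linarith [key]

lemma integrableOn_sub_pow_exp_div {y : ℝ} (hy : 0 < y) (k : ℕ) :
    IntegrableOn (fun u => (u - y) ^ k * Real.exp (-u) / u) (Set.Ioi y) := by
  have hbase : IntegrableOn (fun u => (1/y) * (u ^ k * Real.exp (-u))) (Set.Ioi y) :=
    ((integrableOn_pow_exp k).mono_set (Set.Ioi_subset_Ioi hy.le)).const_mul _
  refine hbase.mono' ?_ ?_
  · exact ((((continuousOn_id.sub continuousOn_const).pow k).mul
      ((Real.continuous_exp.comp continuous_neg).continuousOn)).div continuousOn_id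
      (fun x hx => (hy.trans hx).ne')).aestronglyMeasurable measurableSet_Ioi
  · filter_upwards [ae_restrict_mem measurableSet_Ioi] with u hu
    have h1 : y < u := hu
    have h2 : (u - y) ^ k ≤ u ^ k := pow_le_pow_left₀ (by linarith) (by linarith) k
    rw [Real.norm_eq_abs, abs_of_nonneg (div_nonneg (mul_nonneg
      (pow_nonneg (by linarith) k) (Real.exp_pos _).le) (by linarith))]
    have h3 : (u - y) ^ k * Real.exp (-u) / u ≤ u ^ k * Real.exp (-u) / y :=
      div_le_div₀ (mul_nonneg (pow_nonneg (by linarith) k) (Real.exp_pos _).le)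
        (mul_le_mul_of_nonneg_right h2 (Real.exp_pos _).le) hy h1.le
    calc (u - y) ^ k * Real.exp (-u) / u ≤ u ^ k * Real.exp (-u) / y := h3
      _ = (1/y) * (u ^ k * Real.exp (-u)) := by ring

lemma int_sub_pow_exp (y : ℝ) (k : ℕ) :
    ∫ u in Set.Ioi y, (u - y) ^ k * Real.exp (-u)
      = (Nat.factorial k : ℝ) * Real.exp (-y) := by
  rw [shift_Ioi (fun u => (u - y) ^ k * Real.exp (-u)) y]
  have : ∀ x ∈ Set.Ioi (0:ℝ), (x + y - y) ^ k * Real.exp (-(x + y))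
      = (x ^ k * Real.exp (-x)) * Real.exp (-y) := by
    intro x _
    rw [add_sub_cancel_right, neg_add, Real.exp_add]
    ring
  rw [setIntegral_congr_fun measurableSet_Ioi this, integral_mul_const, int_pow_exp]

lemma keyBC {y : ℝ} (hy : 0 < y) : ∀ k : ℕ,
    ∫ u in Set.Ioi y, (u - y) ^ k * Real.exp (-u) / u
      = (Nat.factorial k : ℝ) * y ^ k * upperIncompleteGamma (-(k : ℝ)) y := by
  intro k
  induction k with
  | zero =>
    unfold upperIncompleteGamma
    simp only [Nat.factorial_zero, Nat.cast_one, pow_zero, one_mul, Nat.cast_zero, neg_zero]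
    refine setIntegral_congr_fun measurableSet_Ioi (fun u hu => ?_)
    have h0 : (0:ℝ) < u := hy.trans hu
    rw [zero_sub, Real.rpow_neg_one]
    field_simp
  | succ k IH =>
    have hsplit : ∀ u ∈ Set.Ioi y, (u - y) ^ (k+1) * Real.exp (-u) / u
        = (u - y) ^ k * Real.exp (-u) - y * ((u - y) ^ k * Real.exp (-u) / u) := by
      intro u hu
      have h1 : y < u := hu
      have h0 : u ≠ 0 := (hy.trans h1).ne'
      field_simp
      ring
    rw [setIntegral_congr_fun measurableSet_Ioi hsplit,
      integral_sub (by
        have := (integrableOn_pow_exp k).mono_set (Set.Ioi_subset_Ioi (le_of_lt hy))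
        -- need integrability of (u-y)^k exp(-u)
        exact (by
          refine ((integrableOn_pow_exp k).mono_set (Set.Ioi_subset_Ioi hy.le)).mono' ?_ ?_
          · exact ((((continuousOn_id.sub continuousOn_const).pow k).mul
              ((Real.continuous_exp.comp continuous_neg).continuousOn))).aestronglyMeasurable
              measurableSet_Ioi
          · filter_upwards [ae_restrict_mem measurableSet_Ioi] with u hu
            have h1 : y < u := hu
            have h2 : (u - y) ^ k ≤ u ^ k := pow_le_pow_left₀ (by linarith) (by linarith) k
            rw [Real.norm_eq_abs, abs_of_nonneg (mul_nonneg (pow_nonneg (by linarith) k)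
              (Real.exp_pos _).le)]
            exact mul_le_mul_of_nonneg_right h2 (Real.exp_pos _).le)
        ) ((integrableOn_sub_pow_exp_div hy k).const_mul y),
      int_sub_pow_exp, MeasureTheory.integral_const_mul, IH]
    have hrec := gammaRec hy (s := -((k:ℝ)+1)) (neg_nonpos.mpr (by positivity))
    have he : -((k:ℝ)+1) + 1 = -(k:ℝ) := by ring
    rw [he] at hrec
    have hAB : y ^ (k+1) * y ^ (-((k:ℝ)+1)) = 1 := by
      rw [← Real.rpow_natCast y (k+1), ← Real.rpow_add hy]
      rw [show ((k+1:ℕ):ℝ) + (-((k:ℝ)+1)) = 0 by push_cast; ring, Real.rpow_zero]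
    have hfac : ((Nat.factorial (k+1) : ℝ)) = ((k:ℝ)+1) * (Nat.factorial k : ℝ) := by
      push_cast [Nat.factorial_succ]
      ring
    have hcast : -((k:ℝ)+1) = -((k+1 : ℕ) : ℝ) := by push_cast; ring
    rw [← hcast]
    -- goal : k! * exp(-y) - y * (k! * y^k * Γ(-k,y)) = (k+1)! * y^(k+1) * Γ(-(k+1),y)
    rw [hrec, hfac]
    linear_combination (-((Nat.factorial k : ℝ) * Real.exp (-y))) * hAB

lemma hasDerivAt_exp_partial (m : ℕ) (x : ℝ) :
    HasDerivAt (fun x : ℝ => Real.exp (-x) * ∑ k ∈ Finset.range (m+1), x ^ k / (Nat.factorial k))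
      (-(Real.exp (-x) * x ^ m / (Nat.factorial m))) x := by
  have hexp : ∀ t : ℝ, HasDerivAt (fun x : ℝ => Real.exp (-x)) (-Real.exp (-t)) t := by
    intro t
    simpa using (hasDerivAt_neg t).exp
  induction m with
  | zero =>
    have heq : (fun x : ℝ => Real.exp (-x) * ∑ k ∈ Finset.range 1, x ^ k / (Nat.factorial k))
        = fun x : ℝ => Real.exp (-x) := by
      funext t; simp
    rw [heq]
    simpa using hexp x
  | succ m IH =>
    have heq : (fun x : ℝ => Real.exp (-x) * ∑ k ∈ Finset.range (m+2), x ^ k / (Nat.factorial k))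
        = fun x : ℝ => (Real.exp (-x) * ∑ k ∈ Finset.range (m+1), x ^ k / (Nat.factorial k))
            + Real.exp (-x) * (x ^ (m+1) / (Nat.factorial (m+1))) := by
      funext t; rw [Finset.sum_range_succ, mul_add]
    rw [heq]
    have h2 : HasDerivAt (fun x : ℝ => Real.exp (-x) * (x ^ (m+1) / (Nat.factorial (m+1))))
        (-Real.exp (-x) * (x ^ (m+1) / (Nat.factorial (m+1)))
          + Real.exp (-x) * (((m+1) : ℕ) * x ^ m / (Nat.factorial (m+1)))) x := by
      have hp : HasDerivAt (fun x : ℝ => x ^ (m+1) / (Nat.factorial (m+1)))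
          ((((m+1) : ℕ) * x ^ m) / (Nat.factorial (m+1))) x := by
        simpa using (hasDerivAt_pow (m+1) x).div_const ((Nat.factorial (m+1) : ℝ))
      have := (hexp x).mul hp
      exact this
    have := IH.add h2
    refine this.congr_deriv ?_
    have hfac : ((Nat.factorial (m+1) : ℝ)) = ((m:ℝ)+1) * (Nat.factorial m : ℝ) := by
      push_cast [Nat.factorial_succ]; ring
    have hm : (Nat.factorial m : ℝ) ≠ 0 := Nat.cast_ne_zero.mpr (Nat.factorial_ne_zero m)
    have hm1 : ((m:ℝ)+1) ≠ 0 := by positivity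
    rw [hfac]
    field_simp
    push_cast
    ring

lemma integrableOn_exp_partial (m : ℕ) :
    IntegrableOn (fun x : ℝ => Real.exp (-x) * ∑ k ∈ Finset.range (m+1),
      x ^ k / (Nat.factorial k)) (Set.Ioi (0:ℝ)) := by
  have heq : (fun x : ℝ => Real.exp (-x) * ∑ k ∈ Finset.range (m+1), x ^ k / (Nat.factorial k))
      = fun x : ℝ => ∑ k ∈ Finset.range (m+1), (1 / (Nat.factorial k : ℝ)) * (x ^ k * Real.exp (-x)) := by
    funext t; rw [Finset.mul_sum]
    refine Finset.sum_congr rfl (fun k _ => by ring)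
  rw [heq]
  exact integrable_finset_sum _ (fun k _ => (integrableOn_pow_exp k).const_mul _)

lemma main_log (α : ℝ) (hα : 0 < α) (m : ℕ) :
    ∫ x in Set.Ioi (0:ℝ), Real.log (1 + α * x) * (Real.exp (-x) * x ^ m / (Nat.factorial m))
      = Real.exp (1/α) * ∑ k ∈ Finset.range (m+1),
          upperIncompleteGamma (-(k : ℝ)) (1/α) / α ^ k := by
  have hy : (0:ℝ) < 1/α := by positivity
  have hPc : Continuous (fun x : ℝ => ∑ k ∈ Finset.range (m+1), x ^ k / (Nat.factorial k)) :=
    continuous_finset_sum _ (fun k _ => (continuous_pow k).div_const _)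
  have hPnn : ∀ x : ℝ, 0 ≤ x → 0 ≤ ∑ k ∈ Finset.range (m+1), x ^ k / (Nat.factorial k) :=
    fun x hx => Finset.sum_nonneg (fun k _ => by positivity)
  -- integrability of f
  have hf_int : IntegrableOn
      (fun x => Real.log (1 + α * x) * (Real.exp (-x) * x ^ m / (Nat.factorial m)))
      (Set.Ioi (0:ℝ)) := by
    refine ((integrableOn_pow_exp (m+1)).const_mul (α / (Nat.factorial m : ℝ))).mono' ?_ ?_
    · apply ContinuousOn.aestronglyMeasurable _ measurableSet_Ioi
      refine ContinuousOn.mul ?_ (Continuous.continuousOn (by fun_prop))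
      refine ContinuousOn.log (by fun_prop) (fun x hx => ?_)
      have hx0 : (0:ℝ) < x := hx
      positivity
    · filter_upwards [ae_restrict_mem measurableSet_Ioi] with x hx
      have hx0 : (0:ℝ) < x := hx
      have hl0 : 0 ≤ Real.log (1 + α * x) := Real.log_nonneg (by nlinarith)
      have hl1 : Real.log (1 + α * x) ≤ α * x := by
        have := Real.log_le_sub_one_of_pos (show (0:ℝ) < 1 + α*x by positivity)
        linarith
      rw [Real.norm_eq_abs, abs_of_nonneg (mul_nonneg hl0 (by positivity))]
      calc Real.log (1 + α * x) * (Real.exp (-x) * x ^ m / (Nat.factorial m))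
          ≤ α * x * (Real.exp (-x) * x ^ m / (Nat.factorial m)) :=
            mul_le_mul_of_nonneg_right hl1 (by positivity)
        _ = α / (Nat.factorial m : ℝ) * (x ^ (m+1) * Real.exp (-x)) := by ring
  -- integrability of g
  have hg_int : IntegrableOn
      (fun x => α / (1 + α * x) *
        (Real.exp (-x) * ∑ k ∈ Finset.range (m+1), x ^ k / (Nat.factorial k)))
      (Set.Ioi (0:ℝ)) := by
    refine ((integrableOn_exp_partial m).const_mul α).mono' ?_ ?_
    · apply ContinuousOn.aestronglyMeasurable _ measurableSet_Ioi
      refine ContinuousOn.mul (ContinuousOn.div continuousOn_const (by fun_prop)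
        (fun x hx => ?_)) (((Real.continuous_exp.comp continuous_neg).mul hPc).continuousOn)
      have hx0 : (0:ℝ) < x := hx
      positivity
    · filter_upwards [ae_restrict_mem measurableSet_Ioi] with x hx
      have hx0 : (0:ℝ) < x := hx
      have h1 : α / (1 + α*x) ≤ α := by
        rw [div_le_iff₀ (by positivity)]
        nlinarith [mul_pos hα hx0]
      have h2 : (0:ℝ) ≤ Real.exp (-x) * ∑ k ∈ Finset.range (m+1), x ^ k / (Nat.factorial k) :=
        mul_nonneg (Real.exp_pos _).le (hPnn x hx0.le)
      rw [Real.norm_eq_abs, abs_of_nonneg (mul_nonneg (by positivity) h2)]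
      exact mul_le_mul_of_nonneg_right h1 h2
  -- continuity of Q at 0
  have hQc : ContinuousAt (fun x : ℝ => Real.log (1 + α * x) *
      (Real.exp (-x) * ∑ k ∈ Finset.range (m+1), x ^ k / (Nat.factorial k))) 0 := by
    have h1 : ContinuousAt (fun x : ℝ => 1 + α * x) 0 := by fun_prop
    have h2 : ContinuousAt Real.log ((fun x : ℝ => 1 + α * x) 0) :=
      Real.continuousAt_log (by norm_num)
    have h3 : ContinuousAt (fun x : ℝ => Real.log (1 + α * x)) 0 := by
      have := ContinuousAt.comp (g := Real.log) (f := fun x : ℝ => 1 + α * x) (x := (0:ℝ)) h2 h1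
      simpa [Function.comp_def] using this
    exact h3.mul ((Real.continuous_exp.comp continuous_neg).mul hPc).continuousAt
  -- derivative
  have hQd : ∀ x ∈ Set.Ioi (0:ℝ), HasDerivAt (fun x : ℝ => Real.log (1 + α * x) *
      (Real.exp (-x) * ∑ k ∈ Finset.range (m+1), x ^ k / (Nat.factorial k)))
      (α / (1 + α * x) *
        (Real.exp (-x) * ∑ k ∈ Finset.range (m+1), x ^ k / (Nat.factorial k))
       - Real.log (1 + α * x) * (Real.exp (-x) * x ^ m / (Nat.factorial m))) x := by
    intro x hx
    have hx0 : (0:ℝ) < x := hx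
    have hpos : (0:ℝ) < 1 + α * x := by positivity
    have h1 : HasDerivAt (fun x : ℝ => 1 + α * x) α x := by
      simpa using ((hasDerivAt_id x).const_mul α).const_add 1
    have hlog : HasDerivAt (fun x : ℝ => Real.log (1 + α * x)) (α / (1 + α * x)) x := by
      have := (Real.hasDerivAt_log hpos.ne').comp x h1
      simpa [div_eq_inv_mul, Function.comp_def] using this
    have := hlog.mul (hasDerivAt_exp_partial m x)
    refine this.congr_deriv ?_
    ring
  -- limit at infinity
  have hQt : Tendsto (fun x : ℝ => Real.log (1 + α * x) *
      (Real.exp (-x) * ∑ k ∈ Finset.range (m+1), x ^ k / (Nat.factorial k))) atTop (𝓝 0) := by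
    apply squeeze_zero' (g := fun x => ∑ k ∈ Finset.range (m+1),
      (α / (Nat.factorial k : ℝ)) * (x ^ (k+1) * Real.exp (-x)))
    · filter_upwards [eventually_gt_atTop 0] with x hx
      exact mul_nonneg (Real.log_nonneg (by nlinarith))
        (mul_nonneg (Real.exp_pos _).le (hPnn x hx.le))
    · filter_upwards [eventually_gt_atTop 0] with x hx
      have hl1 : Real.log (1 + α * x) ≤ α * x := by
        have := Real.log_le_sub_one_of_pos (show (0:ℝ) < 1 + α*x by positivity)
        linarith
      calc Real.log (1 + α * x) *
            (Real.exp (-x) * ∑ k ∈ Finset.range (m+1), x ^ k / (Nat.factorial k))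
          ≤ α * x * (Real.exp (-x) * ∑ k ∈ Finset.range (m+1), x ^ k / (Nat.factorial k)) :=
            mul_le_mul_of_nonneg_right hl1 (mul_nonneg (Real.exp_pos _).le (hPnn x hx.le))
        _ = ∑ k ∈ Finset.range (m+1), (α / (Nat.factorial k : ℝ)) *
              (x ^ (k+1) * Real.exp (-x)) := by
            rw [Finset.mul_sum, Finset.mul_sum]
            exact Finset.sum_congr rfl (fun k _ => by ring)
    · have h := tendsto_finset_sum (Finset.range (m+1))
        (fun k (_ : k ∈ Finset.range (m+1)) =>
          (tendsto_pow_mul_exp_neg_atTop_nhds_zero (k+1)).const_mul (α / (Nat.factorial k : ℝ)))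
      simpa using h
  -- integration by parts
  have hIBP := integral_Ioi_of_hasDerivAt_of_tendsto hQc.continuousWithinAt hQd
    (hg_int.sub hf_int) hQt
  rw [integral_sub hg_int hf_int] at hIBP
  simp only [mul_zero, add_zero, Real.log_one, zero_mul, neg_zero, zero_sub] at hIBP
  have hfg : (∫ x in Set.Ioi (0:ℝ),
      Real.log (1 + α * x) * (Real.exp (-x) * x ^ m / (Nat.factorial m)))
      = ∫ x in Set.Ioi (0:ℝ), α / (1 + α * x) *
        (Real.exp (-x) * ∑ k ∈ Finset.range (m+1), x ^ k / (Nat.factorial k)) := by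
    linarith [hIBP]
  rw [hfg]
  -- integrability of each summand
  have hk_int : ∀ k : ℕ, IntegrableOn
      (fun x : ℝ => x ^ k * Real.exp (-x) / (x + 1/α)) (Set.Ioi (0:ℝ)) := by
    intro k
    refine ((integrableOn_pow_exp k).const_mul (1/(1/α))).mono' ?_ ?_
    · apply ContinuousOn.aestronglyMeasurable _ measurableSet_Ioi
      refine ContinuousOn.div (Continuous.continuousOn (by fun_prop)) (by fun_prop)
        (fun x hx => ?_)
      have hx0 : (0:ℝ) < x := hx
      positivity
    · filter_upwards [ae_restrict_mem measurableSet_Ioi] with x hx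
      have hx0 : (0:ℝ) < x := hx
      rw [Real.norm_eq_abs, abs_of_nonneg (by positivity)]
      calc x ^ k * Real.exp (-x) / (x + 1/α) ≤ x ^ k * Real.exp (-x) / (1/α) :=
            div_le_div₀ (by positivity) le_rfl hy (by linarith)
        _ = 1/(1/α) * (x ^ k * Real.exp (-x)) := by ring
  -- value of each summand
  have hk_val : ∀ k : ℕ, ∫ x in Set.Ioi (0:ℝ), x ^ k * Real.exp (-x) / (x + 1/α)
      = Real.exp (1/α) * ((Nat.factorial k : ℝ) * (1/α) ^ k *
          upperIncompleteGamma (-(k:ℝ)) (1/α)) := by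
    intro k
    have h := keyBC hy k
    rw [shift_Ioi (fun u => (u - 1/α)^k * Real.exp (-u) / u) (1/α)] at h
    have heq : ∀ x ∈ Set.Ioi (0:ℝ), (x + 1/α - 1/α)^k * Real.exp (-(x + 1/α)) / (x + 1/α)
        = (x ^ k * Real.exp (-x) / (x + 1/α)) * Real.exp (-(1/α)) := by
      intro x hx
      rw [add_sub_cancel_right, neg_add, Real.exp_add]
      ring
    rw [setIntegral_congr_fun measurableSet_Ioi heq, integral_mul_const] at h
    rw [← h, mul_comm, mul_assoc, ← Real.exp_add]
    simp
  -- rewrite g as a sum and integrate term by term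
  have hg_eq : ∀ x ∈ Set.Ioi (0:ℝ), α / (1 + α * x) *
      (Real.exp (-x) * ∑ k ∈ Finset.range (m+1), x ^ k / (Nat.factorial k))
      = ∑ k ∈ Finset.range (m+1),
          (1 / (Nat.factorial k : ℝ)) * (x ^ k * Real.exp (-x) / (x + 1/α)) := by
    intro x hx
    have hx0 : (0:ℝ) < x := hx
    have h1 : 1 + α * x = α * (x + 1/α) := by
      field_simp
      ring
    have h2 : α / (1 + α * x) = 1 / (x + 1/α) := by
      rw [h1]
      rw [div_eq_div_iff (by positivity) (by positivity)]
      ring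
    rw [h2, Finset.mul_sum, Finset.mul_sum]
    refine Finset.sum_congr rfl (fun k _ => by ring)
  rw [setIntegral_congr_fun measurableSet_Ioi hg_eq,
    integral_finset_sum _ (fun k _ => (hk_int k).const_mul _)]
  rw [Finset.mul_sum]
  refine Finset.sum_congr rfl (fun k hk => ?_)
  rw [MeasureTheory.integral_const_mul, hk_val k]
  have hfk : (Nat.factorial k : ℝ) ≠ 0 := Nat.cast_ne_zero.mpr (Nat.factorial_ne_zero k)
  have hαk : α ^ k ≠ 0 := pow_ne_zero k hα.ne'
  field_simp
  ring_nf
  rw [← mul_pow, mul_inv_cancel₀ hα.ne', one_pow, one_mul]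


/-- Closed form `R⁽¹⁾(α, M)`: for `α > 0` and `M ≥ 1`,
`∫₀^∞ log₂(1 + α x) x^(M−1) e^(−x)/(M−1)! dx
  = log₂(e) e^(1/α) Σ_{k=0}^{M−1} Γ(−k, 1/α)/α^k`. -/
theorem stmt0 (α : ℝ) (hα : 0 < α) (M : ℕ) (hM : 0 < M) :
    ∫ x in Set.Ioi (0 : ℝ),
        Real.logb 2 (1 + α * x) * (x ^ (M - 1) * Real.exp (-x) / (Nat.factorial (M - 1))) =
      Real.logb 2 (Real.exp 1) * Real.exp (1 / α) *
        ∑ k ∈ Finset.range M, upperIncompleteGamma (-(k : ℝ)) (1 / α) / α ^ k := by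
  obtain ⟨m, rfl⟩ : ∃ m, M = m + 1 := ⟨M - 1, (Nat.succ_pred_eq_of_pos hM).symm⟩
  simp only [Nat.add_sub_cancel]
  have heq : ∀ x ∈ Set.Ioi (0:ℝ),
      Real.logb 2 (1 + α * x) * (x ^ m * Real.exp (-x) / (Nat.factorial m))
      = (Real.log 2)⁻¹ *
          (Real.log (1 + α * x) * (Real.exp (-x) * x ^ m / (Nat.factorial m))) := by
    intro x _
    rw [Real.logb, div_eq_inv_mul]
    ring
  rw [setIntegral_congr_fun measurableSet_Ioi heq, MeasureTheory.integral_const_mul,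
    main_log α hα m]
  have hb : Real.logb 2 (Real.exp 1) = (Real.log 2)⁻¹ := by
    rw [Real.logb, Real.log_exp, one_div]
  rw [hb]
  ring
end

section
/- (Lemma 3, sufficient condition for minimal training length.) Let N_t ≥ 2 be an integer, let N_B and T̄ be reals with 0 < N_B < T̄, and let L > 0 and P > 0 be reals. Set ψ = −γ + Σ_{l=1}^{N_t−2} 1/l (the digamma value ψ(N_t−1)), and define the effective throughput F(t) = (1 − t/T̄) · ln( L·P·e^ψ·T̄ / (√(T̄ − t) + 1)² ) for t ∈ [N_B, T̄). If ln(P·L) + ψ > √(T̄ − N_B)/(√(T̄ − N_B) + 1) + 2·ln(√(1 − N_B/T̄) + 1/√T̄), then F(N_B) > F(t) for every t ∈ (N_B, T̄); that is, the optimal training length is the minimum possible value T̄_t* = N_B. -/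
open Real Finset

/-- Lemma 3 (sufficient condition for minimal training length): let `N_t ≥ 2`,
`0 < N_B < T̄`, `L, P > 0`, `ψ = ψ(N_t−1) = −γ + Σ_{l=1}^{N_t−2} 1/l`, and
`F(t) = (1 − t/T̄) ln(L P e^ψ T̄/(√(T̄−t)+1)²)`.  If
`ln(P L) + ψ > √(T̄−N_B)/(√(T̄−N_B)+1) + 2 ln(√(1−N_B/T̄) + 1/√T̄)`,
then `F(N_B) > F(t)` for all `t ∈ (N_B, T̄)`, i.e. the optimal training length
is the minimal value `N_B`. -/
theorem stmt8 (Nt : ℕ) (hNt : 2 ≤ Nt) (NB T L P : ℝ)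
    (hNB : 0 < NB) (hT : NB < T) (hL : 0 < L) (hP : 0 < P)
    (ψ : ℝ)
    (hψ : ψ = -Real.eulerMascheroniConstant + ∑ l ∈ Finset.range (Nt - 2), 1 / ((l : ℝ) + 1))
    (F : ℝ → ℝ)
    (hF : ∀ t, F t = (1 - t / T) *
      Real.log (L * P * Real.exp ψ * T / (Real.sqrt (T - t) + 1) ^ 2))
    (hcond : Real.log (P * L) + ψ >
      Real.sqrt (T - NB) / (Real.sqrt (T - NB) + 1) +
        2 * Real.log (Real.sqrt (1 - NB / T) + 1 / Real.sqrt T)) :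
    ∀ t, NB < t → t < T → F t < F NB := by
  intro t ht htT
  have hT0 : 0 < T := hNB.trans hT
  set K : ℝ := Real.log (L * P * Real.exp ψ * T) with hK
  set s₀ : ℝ := T - NB with hs0
  have hs0pos : 0 < s₀ := by simp [hs0]; linarith
  set g : ℝ → ℝ := fun u => u / T * (K - 2 * Real.log (Real.sqrt u + 1)) with hg
  have hApos : 0 < L * P * Real.exp ψ * T := by positivity
  -- rewrite F via g
  have key : ∀ x, F x = g (T - x) := by
    intro x
    rw [hF, hg]
    have h1 : (0:ℝ) < Real.sqrt (T - x) + 1 := by positivity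
    have h2 : Real.log (L * P * Real.exp ψ * T / (Real.sqrt (T - x) + 1) ^ 2)
        = K - 2 * Real.log (Real.sqrt (T - x) + 1) := by
      rw [Real.log_div (ne_of_gt hApos) (by positivity), Real.log_pow]
      push_cast; ring
    rw [h2]
    have : 1 - x / T = (T - x) / T := by field_simp
    rw [this]
  -- the condition implies derivative positivity at s₀
  have hKval : K = Real.log L + Real.log P + ψ + Real.log T := by
    rw [hK, Real.log_mul (by positivity) (ne_of_gt hT0),
      Real.log_mul (by positivity) (by positivity),
      Real.log_mul (ne_of_gt hL) (ne_of_gt hP), Real.log_exp]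
  have hsqrtT : Real.sqrt (1 - NB / T) + 1 / Real.sqrt T
      = (Real.sqrt s₀ + 1) / Real.sqrt T := by
    have : (1 : ℝ) - NB / T = s₀ / T := by rw [hs0]; field_simp
    rw [this, Real.sqrt_div hs0pos.le]
    field_simp
  have hcond' : K - 2 * Real.log (Real.sqrt s₀ + 1)
      - Real.sqrt s₀ / (Real.sqrt s₀ + 1) > 0 := by
    have hlogdiv : Real.log ((Real.sqrt s₀ + 1) / Real.sqrt T)
        = Real.log (Real.sqrt s₀ + 1) - Real.log T / 2 := by
      rw [Real.log_div (by positivity) (by positivity), Real.log_sqrt hT0.le]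
    rw [hsqrtT, hlogdiv] at hcond
    rw [Real.log_mul (ne_of_gt hP) (ne_of_gt hL)] at hcond
    rw [hKval]
    linarith
  -- strict monotonicity of g on [0, s₀]
  have hmono : StrictMonoOn g (Set.Icc 0 s₀) := by
    apply strictMonoOn_of_deriv_pos (convex_Icc 0 s₀)
    · apply ContinuousOn.mul
      · exact (continuous_id.div_const T).continuousOn
      · apply ContinuousOn.sub continuousOn_const
        apply ContinuousOn.mul continuousOn_const
        apply ContinuousOn.log
        · exact (Real.continuous_sqrt.continuousOn).add continuousOn_const
        · intro x hx
          positivity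
    · intro s hs
      rw [interior_Icc] at hs
      obtain ⟨hs1, hs2⟩ := hs
      have hsq : 0 < Real.sqrt s := Real.sqrt_pos.mpr hs1
      have hsq1 : (0:ℝ) < Real.sqrt s + 1 := by positivity
      have hDA : HasDerivAt g
          ((K - 2 * Real.log (Real.sqrt s + 1) - Real.sqrt s / (Real.sqrt s + 1)) / T) s := by
        have h1 : HasDerivAt Real.sqrt (1 / (2 * Real.sqrt s)) s :=
          Real.hasDerivAt_sqrt (ne_of_gt hs1)
        have h2 : HasDerivAt (fun x => Real.sqrt x + 1) (1 / (2 * Real.sqrt s)) s :=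
          h1.add_const 1
        have h3 : HasDerivAt (fun x => Real.log (Real.sqrt x + 1))
            ((1 / (2 * Real.sqrt s)) / (Real.sqrt s + 1)) s := h2.log (ne_of_gt hsq1)
        have h4 : HasDerivAt (fun x => K - 2 * Real.log (Real.sqrt x + 1))
            (-(2 * ((1 / (2 * Real.sqrt s)) / (Real.sqrt s + 1)))) s :=
          (h3.const_mul 2).const_sub K
        have h5 : HasDerivAt (fun x : ℝ => x / T) (1 / T) s := by
          simpa using (hasDerivAt_id s).div_const T
        have h6 := h5.mul h4
        refine h6.congr_deriv ?_
        symm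
        have hss : Real.sqrt s * Real.sqrt s = s := Real.mul_self_sqrt hs1.le
        field_simp
        linear_combination (-1) * hss
      rw [hDA.deriv]
      apply div_pos _ hT0
      have hlt1 : Real.log (Real.sqrt s + 1) < Real.log (Real.sqrt s₀ + 1) := by
        apply Real.log_lt_log hsq1
        have := Real.sqrt_lt_sqrt hs1.le hs2
        linarith
      have hlt2 : Real.sqrt s / (Real.sqrt s + 1) < Real.sqrt s₀ / (Real.sqrt s₀ + 1) := by
        rw [div_lt_div_iff₀ hsq1 (by positivity)]
        nlinarith [Real.sqrt_lt_sqrt hs1.le hs2]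
      linarith
  have hmem1 : T - t ∈ Set.Icc (0:ℝ) s₀ := ⟨by linarith, by simp [hs0]; linarith⟩
  have hmem2 : s₀ ∈ Set.Icc (0:ℝ) s₀ := ⟨hs0pos.le, le_refl _⟩
  have hlt : T - t < s₀ := by simp [hs0]; linarith
  have := hmono hmem1 hmem2 hlt
  rw [key t, key NB]
  simpa [hs0] using this
end

section
/- Let T̄ > 0 and set c = 1/√T̄. Let x₀ ∈ (0, 1) and let a be a real number with a > x₀/(x₀ + c) + 2·ln(x₀ + c). Then the function f(x) = a·x² − 2·x²·ln(x + c) has derivative f′(x) = 2·a·x − 2·x²/(x + c) − 4·x·ln(x + c) > 0 for every x ∈ (0, x₀]; consequently f is strictly increasing on (0, x₀] and attains its maximum over (0, x₀] uniquely at x₀. -/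
open Real Set

/-- Calculus core of Lemma 3: with `c = 1/√T̄`, `x₀ ∈ (0,1)` and
`a > x₀/(x₀+c) + 2 ln(x₀+c)`, the function `f(x) = a x² − 2 x² ln(x+c)` has
derivative `f′(x) = 2 a x − 2 x²/(x+c) − 4 x ln(x+c) > 0` on `(0, x₀]`,
hence is strictly increasing there and attains its maximum over `(0, x₀]`
uniquely at `x₀`. -/
theorem stmt9 (T : ℝ) (hT : 0 < T) (c : ℝ) (hc : c = 1 / Real.sqrt T)
    (x₀ a : ℝ) (hx₀ : x₀ ∈ Set.Ioo (0 : ℝ) 1)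
    (ha : a > x₀ / (x₀ + c) + 2 * Real.log (x₀ + c)) :
    (∀ x ∈ Set.Ioc (0 : ℝ) x₀,
      HasDerivAt (fun x : ℝ => a * x ^ 2 - 2 * x ^ 2 * Real.log (x + c))
        (2 * a * x - 2 * x ^ 2 / (x + c) - 4 * x * Real.log (x + c)) x ∧
      0 < 2 * a * x - 2 * x ^ 2 / (x + c) - 4 * x * Real.log (x + c)) ∧
    StrictMonoOn (fun x : ℝ => a * x ^ 2 - 2 * x ^ 2 * Real.log (x + c))
      (Set.Ioc (0 : ℝ) x₀) ∧
    (∀ x ∈ Set.Ioc (0 : ℝ) x₀, x ≠ x₀ →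
      a * x ^ 2 - 2 * x ^ 2 * Real.log (x + c) <
        a * x₀ ^ 2 - 2 * x₀ ^ 2 * Real.log (x₀ + c)) := by
  have hcpos : 0 < c := by
    rw [hc]; positivity
  obtain ⟨hx₀0, hx₀1⟩ := hx₀
  -- key facts
  have hxc : ∀ x ∈ Set.Ioc (0 : ℝ) x₀, 0 < x + c := fun x hx => by
    have := hx.1; linarith
  have hderiv : ∀ x ∈ Set.Ioc (0 : ℝ) x₀,
      HasDerivAt (fun x : ℝ => a * x ^ 2 - 2 * x ^ 2 * Real.log (x + c))
        (2 * a * x - 2 * x ^ 2 / (x + c) - 4 * x * Real.log (x + c)) x := by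
    intro x hx
    have hpos := hxc x hx
    have h1 : HasDerivAt (fun x : ℝ => a * x ^ 2) (a * (2 * x)) x := by
      simpa using ((hasDerivAt_pow 2 x).const_mul a)
    have hlog : HasDerivAt (fun x : ℝ => Real.log (x + c)) (1 / (x + c)) x := by
      simpa using ((hasDerivAt_id x).add_const c).log (ne_of_gt hpos)
    have h2 : HasDerivAt (fun x : ℝ => 2 * x ^ 2 * Real.log (x + c))
        (2 * (2 * x) * Real.log (x + c) + 2 * x ^ 2 * (1 / (x + c))) x := by
      have h := (((hasDerivAt_pow 2 x).const_mul 2).mul hlog)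
      exact h.congr_deriv (by norm_num)
    have := h1.sub h2
    exact this.congr_deriv (by ring)
  have hderivpos : ∀ x ∈ Set.Ioc (0 : ℝ) x₀,
      0 < 2 * a * x - 2 * x ^ 2 / (x + c) - 4 * x * Real.log (x + c) := by
    intro x hx
    have hpos := hxc x hx
    have hx0 := hx.1
    have hxle := hx.2
    have hx₀c : 0 < x₀ + c := by linarith
    have hfrac : x / (x + c) ≤ x₀ / (x₀ + c) := by
      rw [div_le_div_iff₀ hpos hx₀c]
      nlinarith
    have hlog : Real.log (x + c) ≤ Real.log (x₀ + c) :=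
      Real.log_le_log (by linarith) (by linarith)
    have key : x / (x + c) + 2 * Real.log (x + c) < a := by linarith
    have : 2 * a * x - 2 * x ^ 2 / (x + c) - 4 * x * Real.log (x + c)
        = 2 * x * (a - (x / (x + c) + 2 * Real.log (x + c))) := by
      field_simp; ring
    rw [this]
    have : 0 < a - (x / (x + c) + 2 * Real.log (x + c)) := by linarith
    positivity
  have hmono : StrictMonoOn (fun x : ℝ => a * x ^ 2 - 2 * x ^ 2 * Real.log (x + c))
      (Set.Ioc (0 : ℝ) x₀) := by
    apply strictMonoOn_of_hasDerivWithinAt_pos (convex_Ioc 0 x₀)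
    · exact fun x hx => ((hderiv x hx).continuousAt).continuousWithinAt
    · intro x hx
      rw [interior_Ioc] at hx
      exact (hderiv x ⟨hx.1, hx.2.le⟩).hasDerivWithinAt
    · intro x hx
      rw [interior_Ioc] at hx
      exact hderivpos x ⟨hx.1, hx.2.le⟩
  refine ⟨fun x hx => ⟨hderiv x hx, hderivpos x hx⟩, hmono, ?_⟩
  intro x hx hne
  exact hmono hx ⟨hx₀0, le_refl _⟩ (lt_of_le_of_ne hx.2 hne)
end

section
/- For every real T̄ > 0 and every real A, the function t ↦ (1 − t/T̄) · ( A − 2·ln(√(T̄ − t) + 1) ) is strictly concave on the interval (0, T̄). -/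
open Real Set

private lemma phi_hasDeriv (T A : ℝ) {s : ℝ} (hs : 0 < s + 1) :
    HasDerivAt (fun s : ℝ => (-A + 2 * Real.log (s + 1)) / T + s / (T * (s + 1)))
      (2 / (T * (s + 1)) + 1 / (T * (s + 1) ^ 2)) s := by
  have h1 : HasDerivAt (fun s : ℝ => s + 1) 1 s := by
    simpa using (hasDerivAt_id s).add_const 1
  have hlog : HasDerivAt (fun s : ℝ => Real.log (s + 1)) (1 / (s + 1)) s := by
    simpa using h1.log hs.ne'
  have h2 : HasDerivAt (fun s : ℝ => (-A + 2 * Real.log (s + 1)) / T)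
      (2 / (s + 1) / T) s := by
    exact (((hlog.const_mul 2).const_add (-A)).div_const T).congr_deriv (by ring)
  have h3 : HasDerivAt (fun s : ℝ => s / (s + 1)) (1 / (s + 1) ^ 2) s := by
    have := (hasDerivAt_id s).div h1 hs.ne'
    refine this.congr_deriv (Eq.symm ?_)
    field_simp
    simp
  have h4 : HasDerivAt (fun s : ℝ => s / (T * (s + 1))) (1 / (T * (s + 1) ^ 2)) s := by
    have hfun : (fun s : ℝ => s / (T * (s + 1))) = fun s : ℝ => s / (s + 1) / T := by
      funext x; rw [div_div, mul_comm]
    have heq : 1 / (T * (s + 1) ^ 2) = 1 / (s + 1) ^ 2 / T := by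
      rw [div_div, mul_comm]
    rw [hfun, heq]
    exact h3.div_const T
  have := h2.add h4
  refine this.congr_deriv (Eq.symm ?_)
  rw [div_div, mul_comm]

/-- For `T̄ > 0` and any real `A`, the effective-throughput expression
`t ↦ (1 − t/T̄)(A − 2 ln(√(T̄−t) + 1))` is strictly concave on `(0, T̄)`. -/
theorem stmt11 (T : ℝ) (hT : 0 < T) (A : ℝ) :
    StrictConcaveOn ℝ (Set.Ioo (0 : ℝ) T)
      (fun t : ℝ => (1 - t / T) * (A - 2 * Real.log (Real.sqrt (T - t) + 1))) := by
  set f : ℝ → ℝ := fun t => (1 - t / T) * (A - 2 * Real.log (Real.sqrt (T - t) + 1)) with hf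
  set φ : ℝ → ℝ := fun s => (-A + 2 * Real.log (s + 1)) / T + s / (T * (s + 1)) with hφ
  set g : ℝ → ℝ := fun t => φ (Real.sqrt (T - t)) with hg
  -- derivative of f on Ioo
  have key : ∀ t ∈ Set.Ioo (0:ℝ) T, HasDerivAt f (g t) t := by
    intro t ht
    obtain ⟨ht0, htT⟩ := ht
    have hu : 0 < T - t := by linarith
    set s := Real.sqrt (T - t) with hs
    have hs0 : 0 < s := Real.sqrt_pos.2 hu
    have hss : s * s = T - t := Real.mul_self_sqrt hu.le
    have hTt : HasDerivAt (fun t : ℝ => T - t) (-1) t := by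
      simpa using ((hasDerivAt_id t).const_sub T)
    have hsqrt : HasDerivAt (fun t : ℝ => Real.sqrt (T - t)) (1 / (2 * s) * (-1)) t :=
      (Real.hasDerivAt_sqrt hu.ne').comp t hTt
    have hsp : s + 1 ≠ 0 := by positivity
    have hlog : HasDerivAt (fun t : ℝ => Real.log (Real.sqrt (T - t) + 1))
        ((1 / (2 * s) * (-1)) / (s + 1)) t := by
      simpa using (hsqrt.add_const 1).log hsp
    have h1 : HasDerivAt (fun t : ℝ => 1 - t / T) (-(1 / T)) t := by
      simpa using (((hasDerivAt_id t).div_const T).const_sub 1)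
    have h2 : HasDerivAt (fun t : ℝ => A - 2 * Real.log (Real.sqrt (T - t) + 1))
        (-(2 * ((1 / (2 * s) * (-1)) / (s + 1)))) t :=
      (hlog.const_mul 2).const_sub A
    have := h1.mul h2
    refine this.congr_deriv (Eq.symm ?_)
    have hA : A - 2 * Real.log (s + 1) = -(-A + 2 * Real.log (s + 1)) := by ring
    show φ s = _
    simp only [hφ]
    have h1t : 1 - t / T = s * s / T := by rw [hss]; field_simp
    rw [h1t]
    field_simp
    ring_nf
    rw [← hs]
  have hfc : ContinuousOn f (Set.Ioo 0 T) := by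
    apply ContinuousOn.mul
    · fun_prop
    · apply ContinuousOn.sub continuousOn_const
      apply ContinuousOn.const_smul ?_ (2:ℝ) |>.congr (fun x _ => rfl)
      intro x hx
      apply (Real.continuousAt_log ?_).comp ?_ |>.continuousWithinAt
      · positivity
      · fun_prop
  -- strict antitonicity of g on Ioo
  have hganti : StrictAntiOn g (Set.Ioo (0:ℝ) T) := by
    have hφmono : StrictMonoOn φ (Set.Ici (0:ℝ)) := by
      apply strictMonoOn_of_deriv_pos (convex_Ici 0)
      · intro x hx
        have hx1 : (0:ℝ) < x + 1 := by simp at hx; linarith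
        exact (phi_hasDeriv T A hx1).continuousAt.continuousWithinAt
      · intro x hx
        rw [interior_Ici] at hx
        have hx1 : (0:ℝ) < x + 1 := by simp at hx; linarith
        rw [(phi_hasDeriv T A hx1).deriv]
        positivity
    intro x hx y hy hxy
    have : Real.sqrt (T - y) < Real.sqrt (T - x) := by
      apply Real.sqrt_lt_sqrt (by linarith [hy.2]) (by linarith)
    exact hφmono (Real.sqrt_nonneg _) (Real.sqrt_nonneg _) this
  -- conclude
  apply StrictAntiOn.strictConcaveOn_of_deriv (convex_Ioo 0 T) hfc
  rw [interior_Ioo]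
  intro x hx y hy hxy
  rw [(key x hx).deriv, (key y hy).deriv]
  exact hganti hx hy hxy
end

section
/- Let a₀ > 0 and X₀ ∈ (0, 1) be reals, and define f(x) = (1 − x)/(X₀/x + a₀) = x·(1 − x)/(X₀ + a₀·x) for x ∈ (0, 1). Then f is strictly concave on (0, 1), the point x* = √(X₀/a₀ + X₀²/a₀²) − X₀/a₀ lies in the open interval (0, 1), and x* is the unique maximizer of f on (0, 1). -/
open Real Set

private lemma stmt15_key (a₀ X₀ b c x : ℝ) (ha₀ : 0 < a₀) (hX0 : 0 < X₀) (hb : b = X₀ / a₀)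
    (hc : c = b + b ^ 2) (hx : 0 < x) :
    (1 - x) / (X₀ / x + a₀) = ((2*b+1) - (x+b) - c * (x+b)⁻¹) * a₀⁻¹ := by
  have hbpos : 0 < b := hb ▸ div_pos hX0 ha₀
  have hX : X₀ = a₀ * b := by rw [hb]; field_simp
  subst hX hc
  have hxb : (0:ℝ) < x + b := by positivity
  field_simp
  ring

private lemma stmt15_conc (a₀ b c : ℝ) (ha₀ : 0 < a₀) (hb : 0 < b) (hc : 0 < c) :
    StrictConcaveOn ℝ (Ioo (0:ℝ) 1)
      (fun x : ℝ => ((2*b+1) - (x+b) - c * (x+b)⁻¹) * a₀⁻¹) := by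
  set g : ℝ → ℝ := fun x => ((2*b+1) - (x+b) - c * (x+b)⁻¹) * a₀⁻¹ with hg
  set g₁ : ℝ → ℝ := fun x => (-1 + c * ((x+b)^2)⁻¹) * a₀⁻¹ with hg₁
  have hD : ∀ x ∈ Ioo (0:ℝ) 1, HasDerivAt g (g₁ x) x := by
    intro x hx
    have hxb : (0:ℝ) < x + b := by have := hx.1; positivity
    have h1 : HasDerivAt (fun y : ℝ => y + b) 1 x := (hasDerivAt_id x).add_const b
    have h2 : HasDerivAt (fun y : ℝ => (y+b)⁻¹) (-1 / (x+b)^2) x := h1.inv hxb.ne'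
    have h3 := (((hasDerivAt_const x (2*b+1)).fun_sub h1).fun_sub (h2.const_mul c)).mul_const a₀⁻¹
    refine h3.congr_deriv ?_
    simp only [hg₁]
    ring
  have hD2 : ∀ x ∈ Ioo (0:ℝ) 1, HasDerivAt g₁ (-(2*c*(x+b)) / ((x+b)^2)^2 * a₀⁻¹) x := by
    intro x hx
    have hxb : (0:ℝ) < x + b := by have := hx.1; positivity
    have h1 : HasDerivAt (fun y : ℝ => y + b) 1 x := (hasDerivAt_id x).add_const b
    have h2 : HasDerivAt (fun y : ℝ => (y+b)^2) (2*(x+b)) x := by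
      simpa using h1.fun_pow 2
    have h3 : HasDerivAt (fun y : ℝ => ((y+b)^2)⁻¹) (-(2*(x+b)) / ((x+b)^2)^2) x :=
      h2.inv (by positivity)
    have h4 := ((hasDerivAt_const x (-1:ℝ)).fun_add (h3.const_mul c)).mul_const a₀⁻¹
    refine h4.congr_deriv ?_
    ring
  apply strictConcaveOn_of_deriv2_neg' (convex_Ioo 0 1)
  · intro x hx
    exact (hD x hx).continuousAt.continuousWithinAt
  · intro x hx
    have hxb : (0:ℝ) < x + b := by have := hx.1; positivity
    have hev : deriv g =ᶠ[nhds x] g₁ := by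
      filter_upwards [isOpen_Ioo.mem_nhds hx] with y hy
      exact (hD y hy).deriv
    have heq : deriv^[2] g x = deriv g₁ x := by
      simp only [Function.iterate_succ, Function.iterate_zero, Function.comp_apply, id]
      exact Filter.EventuallyEq.deriv_eq hev
    rw [heq, (hD2 x hx).deriv]
    have h6 : (0:ℝ) < ((x+b)^2)^2 := by positivity
    have h5 : (0:ℝ) < 2*c*(x+b) := by positivity
    have h7 : -(2*c*(x+b)) / ((x+b)^2)^2 < 0 := div_neg_of_neg_of_pos (by linarith) h6
    exact mul_neg_of_neg_of_pos h7 (inv_pos.mpr ha₀)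

/-- Digital-feedback bit allocation: for `a₀ > 0` and `X₀ ∈ (0,1)`, the function
`f(x) = (1−x)/(X₀/x + a₀)` is strictly concave on `(0,1)`, the point
`x* = √(X₀/a₀ + X₀²/a₀²) − X₀/a₀` lies in `(0,1)`, and `x*` is the unique
maximizer of `f` on `(0,1)`. -/
theorem stmt15 (a₀ X₀ : ℝ) (ha₀ : 0 < a₀) (hX₀ : X₀ ∈ Set.Ioo (0 : ℝ) 1) :
    StrictConcaveOn ℝ (Set.Ioo (0 : ℝ) 1)
      (fun x : ℝ => (1 - x) / (X₀ / x + a₀)) ∧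
    (Real.sqrt (X₀ / a₀ + X₀ ^ 2 / a₀ ^ 2) - X₀ / a₀) ∈ Set.Ioo (0 : ℝ) 1 ∧
    (∀ x ∈ Set.Ioo (0 : ℝ) 1,
      x ≠ Real.sqrt (X₀ / a₀ + X₀ ^ 2 / a₀ ^ 2) - X₀ / a₀ →
      (1 - x) / (X₀ / x + a₀) <
        (1 - (Real.sqrt (X₀ / a₀ + X₀ ^ 2 / a₀ ^ 2) - X₀ / a₀)) /
          (X₀ / (Real.sqrt (X₀ / a₀ + X₀ ^ 2 / a₀ ^ 2) - X₀ / a₀) + a₀)) := by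
  obtain ⟨hX0, hX1⟩ := hX₀
  set b := X₀ / a₀ with hb
  have hbpos : 0 < b := div_pos hX0 ha₀
  set c := b + b ^ 2 with hc
  have hcpos : 0 < c := by positivity
  have hceq : X₀ / a₀ + X₀ ^ 2 / a₀ ^ 2 = c := by
    rw [hc, hb]; ring
  rw [hceq]
  set s := Real.sqrt c with hs
  have hs2 : s ^ 2 = c := Real.sq_sqrt hcpos.le
  have hspos : 0 < s := Real.sqrt_pos.mpr hcpos
  have hsb : b < s := by nlinarith
  have hsb1 : s < 1 + b := by nlinarith
  have hmem : s - b ∈ Ioo (0:ℝ) 1 := ⟨by linarith, by linarith⟩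
  have hgconc := stmt15_conc a₀ b c ha₀ hbpos hcpos
  have hkey : ∀ x ∈ Ioo (0:ℝ) 1,
      (1 - x) / (X₀ / x + a₀) = ((2*b+1) - (x+b) - c * (x+b)⁻¹) * a₀⁻¹ :=
    fun x hx => stmt15_key a₀ X₀ b c x ha₀ hX0 hb hc hx.1
  refine ⟨⟨hgconc.1, fun x hx y hy hxy p q hp hq hpq => ?_⟩, hmem, fun x hx hne => ?_⟩
  · have hmem' : p • x + q • y ∈ Ioo (0:ℝ) 1 := hgconc.1 hx hy hp.le hq.le hpq
    simp only
    rw [hkey x hx, hkey y hy, hkey _ hmem']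
    exact hgconc.2 hx hy hxy hp hq hpq
  · rw [hkey x hx, hkey _ hmem]
    have hxb : (0:ℝ) < x + b := by have := hx.1; positivity
    have hsbb : s - b + b = s := by ring
    rw [hsbb]
    have ht : x + b ≠ s := fun h => hne (by linarith)
    have h5 : 0 < (x + b - s)^2 :=
      lt_of_le_of_ne (sq_nonneg _) (Ne.symm (pow_ne_zero 2 (sub_ne_zero.mpr ht)))
    have hinv : c * (x+b)⁻¹ = c / (x+b) := by ring
    have hcs : c * s⁻¹ = s := by
      field_simp
      nlinarith
    rw [hcs]
    apply mul_lt_mul_of_pos_right _ (inv_pos.mpr ha₀)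
    have h6 : 2*s*(x+b) < (x+b)^2 + c := by nlinarith
    have h7 : c * (x+b)⁻¹ = c / (x+b) := by ring
    rw [h7]
    have h8 : 2*s < (x+b) + c/(x+b) := by
      have h10 : (x+b) + c/(x+b) = ((x+b)^2 + c)/(x+b) := by field_simp
      rw [h10]
      exact (lt_div_iff₀ hxb).mpr (by nlinarith)
    linarith
end

section
/- For every integer B ≥ 0 and every integer N_t ≥ 2, 2^B · Β(2^B, N_t/(N_t − 1)) ≤ 2^(−B/(N_t−1)), where Β(x, y) = Γ(x)·Γ(y)/Γ(x + y) is the Beta function. Equivalently, the expected squared quantization alignment under random vector quantization satisfies ξ = 1 − 2^B·Β(2^B, N_t/(N_t−1)) ≥ 1 − 2^(−B/(N_t−1)). -/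
open Real

lemma gamma_prod_bound {δ : ℝ} (hδ0 : 0 < δ) (hδ1 : δ ≤ 1) :
    ∀ n : ℕ, 1 ≤ n →
      Real.Gamma n * Real.Gamma (1 + δ) * (n : ℝ) ^ δ ≤ Real.Gamma ((n : ℝ) + δ) := by
  intro n hn
  induction n, hn using Nat.le_induction with
  | base =>
      simp [Real.Gamma_one, Real.one_rpow]
  | succ n hn ih =>
      have hn1 : (1 : ℝ) ≤ (n : ℝ) := by exact_mod_cast hn
      have hnpos : (0 : ℝ) < (n : ℝ) := by linarith
      have hΓn : 0 < Real.Gamma n := Real.Gamma_pos_of_pos hnpos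
      have hΓδ : 0 < Real.Gamma (1 + δ) := Real.Gamma_pos_of_pos (by linarith)
      -- Γ(n+1) = n Γ(n)
      have h1 : Real.Gamma ((n : ℝ) + 1) = (n : ℝ) * Real.Gamma n :=
        Real.Gamma_add_one (ne_of_gt hnpos)
      have h2 : Real.Gamma ((n : ℝ) + 1 + δ) = ((n : ℝ) + δ) * Real.Gamma ((n : ℝ) + δ) := by
        have := Real.Gamma_add_one (s := (n : ℝ) + δ) (by positivity)
        rw [← this]; ring_nf
      -- Bernoulli: (1 + 1/n)^δ ≤ 1 + δ/n
      have hbern : ((1 : ℝ) + 1 / n) ^ δ ≤ 1 + δ * (1 / n) :=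
        rpow_one_add_le_one_add_mul_self
          (le_trans (by norm_num : (-1:ℝ) ≤ 0) (by positivity)) hδ0.le hδ1
      -- hence n * (n+1)^δ ≤ (n+δ) * n^δ
      have hnn : (0:ℝ) < (n:ℝ) ^ δ := Real.rpow_pos_of_pos hnpos _
      have key : (n : ℝ) * ((n : ℝ) + 1) ^ δ ≤ ((n : ℝ) + δ) * (n : ℝ) ^ δ := by
        have hdiv : ((n : ℝ) + 1) ^ δ / (n : ℝ) ^ δ ≤ ((n : ℝ) + δ) / (n : ℝ) := by
          have e1 : ((n : ℝ) + 1) ^ δ / (n : ℝ) ^ δ = (((n:ℝ)+1)/(n:ℝ)) ^ δ := by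
            rw [Real.div_rpow (by positivity) hnpos.le]
          have e2 : (((n:ℝ)+1)/(n:ℝ)) = 1 + 1/n := by field_simp
          have e3 : ((n:ℝ)+δ)/(n:ℝ) = 1 + δ * (1/n) := by field_simp
          rw [e1, e2, e3]; exact hbern
        rw [div_le_div_iff₀ hnn hnpos] at hdiv
        linarith [hdiv]
      calc Real.Gamma ((n:ℕ)+1 : ℕ) * Real.Gamma (1 + δ) * ((((n:ℕ)+1 : ℕ)) : ℝ) ^ δ
          = (n : ℝ) * ((n:ℝ)+1) ^ δ * (Real.Gamma n * Real.Gamma (1 + δ)) := by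
            push_cast
            rw [h1]; ring
        _ ≤ ((n : ℝ) + δ) * (n:ℝ) ^ δ * (Real.Gamma n * Real.Gamma (1 + δ)) := by
            apply mul_le_mul_of_nonneg_right key (by positivity)
        _ ≤ ((n : ℝ) + δ) * Real.Gamma ((n:ℝ) + δ) := by
            have : Real.Gamma n * Real.Gamma (1 + δ) * (n : ℝ) ^ δ ≤ Real.Gamma ((n : ℝ) + δ) := ih
            have hpos : (0:ℝ) < (n:ℝ) + δ := by linarith
            nlinarith [ih, hpos]
        _ = Real.Gamma (((n:ℕ)+1 : ℕ) + δ) := by push_cast; rw [h2]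

/-- RVQ quantization-error bound: for every integer `B ≥ 0` and every integer
`N_t ≥ 2`, `2^B Β(2^B, N_t/(N_t−1)) ≤ 2^(−B/(N_t−1))`, where
`Β(x, y) = Γ(x)Γ(y)/Γ(x+y)`; equivalently, the RVQ expected squared alignment
satisfies `ξ = 1 − 2^B Β(2^B, N_t/(N_t−1)) ≥ 1 − 2^(−B/(N_t−1))`. -/
theorem stmt16 (B Nt : ℕ) (hNt : 2 ≤ Nt) :
    (2 : ℝ) ^ B *
        (Real.Gamma ((2 : ℝ) ^ B) * Real.Gamma ((Nt : ℝ) / ((Nt : ℝ) - 1)) /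
          Real.Gamma ((2 : ℝ) ^ B + (Nt : ℝ) / ((Nt : ℝ) - 1))) ≤
      (2 : ℝ) ^ (-(B : ℝ) / ((Nt : ℝ) - 1)) := by
  have hNt1 : (1 : ℝ) ≤ (Nt : ℝ) - 1 := by
    have : (2:ℝ) ≤ (Nt:ℝ) := by exact_mod_cast hNt
    linarith
  have hNtpos : (0:ℝ) < (Nt:ℝ) - 1 := by linarith
  set δ : ℝ := 1 / ((Nt : ℝ) - 1) with hδdef
  have hδ0 : 0 < δ := by positivity
  have hδ1 : δ ≤ 1 := by
    rw [hδdef, div_le_one hNtpos]; exact hNt1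
  have hy : (Nt : ℝ) / ((Nt : ℝ) - 1) = 1 + δ := by
    rw [hδdef]; field_simp; ring
  set K : ℕ := 2 ^ B with hKdef
  have hK1 : 1 ≤ K := Nat.one_le_two_pow
  have hKcast : ((K : ℕ) : ℝ) = (2 : ℝ) ^ B := by rw [hKdef]; push_cast; ring
  have hKpos : (0:ℝ) < (K:ℝ) := by
    have : (0:ℕ) < K := hK1; exact_mod_cast this
  have hΓK : 0 < Real.Gamma (K : ℝ) := Real.Gamma_pos_of_pos hKpos
  have hΓδ : 0 < Real.Gamma (1 + δ) := Real.Gamma_pos_of_pos (by linarith)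
  have hKδ : (0:ℝ) < (K:ℝ) ^ δ := Real.rpow_pos_of_pos hKpos _
  have hmain := gamma_prod_bound hδ0 hδ1 K hK1
  -- Γ(K + 1 + δ) = (K+δ) Γ(K+δ)
  have hden : Real.Gamma ((K:ℝ) + (1 + δ)) = ((K:ℝ) + δ) * Real.Gamma ((K:ℝ) + δ) := by
    have := Real.Gamma_add_one (s := (K : ℝ) + δ) (by positivity)
    rw [← this]; ring_nf
  have hdenpos : 0 < Real.Gamma ((K:ℝ) + (1 + δ)) := by
    rw [hden]
    have := Real.Gamma_pos_of_pos (show (0:ℝ) < (K:ℝ) + δ by positivity)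
    positivity
  -- RHS = (K:ℝ) ^ (-δ)
  have hrhs : (2 : ℝ) ^ (-(B : ℝ) / ((Nt : ℝ) - 1)) = (K:ℝ) ^ (-δ) := by
    rw [hKcast, ← Real.rpow_natCast 2 B, ← Real.rpow_mul (by norm_num)]
    congr 1
    rw [hδdef]; ring
  rw [hy, hrhs, ← hKcast, mul_div_assoc', div_le_iff₀ hdenpos,
    Real.rpow_neg hKpos.le, inv_mul_eq_div, le_div_iff₀ hKδ, hden]
  have hΓKδ : 0 < Real.Gamma ((K:ℝ) + δ) :=
    Real.Gamma_pos_of_pos (by positivity)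
  nlinarith [hmain, hΓKδ, hδ0, hKpos, mul_le_mul_of_nonneg_left hmain hKpos.le]
end
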